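/- Let n ≥ 1 and let α ∈ ℕ^n be a nonzero multi-index. Then there is a constant C (depending only on n and α) such that for every finitely supported family of real coefficients (c_β)_{β ∈ ℕ^n}, ‖ Σ_β c_β (|β|+n)^{−|α|/2} ∂^α(γ H_β) ‖_{L^2(γ_{-1})} ≤ C ‖ Σ_β c_β γ H_β ‖_{L^2(γ_{-1})}, where γ(x) = π^{−n/2} e^{−|x|^2} and ∂^α = ∂_{x_1}^{α_1}⋯∂_{x_n}^{α_n}. (This expresses the L^2(γ_{-1})-boundedness of the Riesz transform ∂^α 𝒜^{−|α|/2} on the linear span of the eigenfunctions γH_β of 𝒜, whose eigenvalues are |β|+n.) -/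

import Mathlib

open MeasureTheory Real Filter Set

noncomputable def hermiteH (k : ℕ) (s : ℝ) : ℝ :=
  (-1 : ℝ) ^ k * Real.exp (s ^ 2) * iteratedDeriv k (fun t => Real.exp (-t ^ 2)) s

/-- Partial derivative in the j-th coordinate. -/
noncomputable def pderivCoord {n : ℕ} (j : Fin n) (f : (Fin n → ℝ) → ℝ) :
    (Fin n → ℝ) → ℝ :=
  fun x => deriv (fun t => f (Function.update x j t)) (x j)

/-- The iterated partial derivative ∂^α = ∂₁^{α₁} ⋯ ∂ₙ^{αₙ}. -/
noncomputable def multiPderiv {n : ℕ} (α : Fin n → ℕ) (f : (Fin n → ℝ) → ℝ) :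
    (Fin n → ℝ) → ℝ :=
  (List.finRange n).foldr (fun j g => (pderivCoord j)^[α j] g) f

/-- The measure γ₋₁ on ℝⁿ, with density π^{n/2} e^{|x|²} w.r.t. Lebesgue measure. -/
noncomputable def gaussMPi (n : ℕ) : Measure (Fin n → ℝ) :=
  volume.withDensity fun x => ENNReal.ofReal (Real.pi ^ ((n : ℝ) / 2) * Real.exp (∑ j, x j ^ 2))

/-- γ H_β, the eigenfunction of 𝒜 with eigenvalue |β| + n. -/
noncomputable def gaussHermite {n : ℕ} (β : Fin n → ℕ) : (Fin n → ℝ) → ℝ :=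
  fun x => Real.pi ^ (-(n : ℝ) / 2) * Real.exp (-∑ j, x j ^ 2) * ∏ j, hermiteH (β j) (x j)

open Polynomial in
noncomputable def hP : ℕ → Polynomial ℝ
  | 0 => 1
  | k + 1 => Polynomial.C 2 * Polynomial.X * hP k - Polynomial.derivative (hP k)

lemma hasDerivAt_gauss (s : ℝ) :
    HasDerivAt (fun t : ℝ => Real.exp (-t ^ 2)) (Real.exp (-s ^ 2) * (-(2 * s))) s := by
  have h : HasDerivAt (fun t : ℝ => -t ^ 2) (-(2 * s)) s := by
    simpa using (hasDerivAt_pow 2 s).fun_neg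
  exact h.exp

lemma iteratedDeriv_gauss (k : ℕ) :
    iteratedDeriv k (fun t : ℝ => Real.exp (-t ^ 2)) =
      fun s => (-1 : ℝ) ^ k * Real.exp (-s ^ 2) * (hP k).eval s := by
  induction k with
  | zero => funext s; simp [hP]
  | succ k ih =>
    rw [iteratedDeriv_succ, ih]
    funext s
    have h2 : HasDerivAt (fun t : ℝ => (hP k).eval t) ((Polynomial.derivative (hP k)).eval s) s :=
      (hP k).hasDerivAt s
    have h3 := ((hasDerivAt_gauss s).fun_mul h2).const_mul ((-1 : ℝ) ^ k)
    have h4 : (fun s : ℝ => (-1 : ℝ) ^ k * Real.exp (-s ^ 2) * (hP k).eval s)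
        = fun s : ℝ => (-1 : ℝ) ^ k * (Real.exp (-s ^ 2) * (hP k).eval s) := by
      funext t; ring
    rw [h4, h3.deriv]
    simp only [hP, Polynomial.eval_sub, Polynomial.eval_mul, Polynomial.eval_C, Polynomial.eval_X]
    ring

lemma hermiteH_eval (k : ℕ) (s : ℝ) : hermiteH k s = (hP k).eval s := by
  rw [hermiteH, iteratedDeriv_gauss]
  have h1 : Real.exp (s ^ 2) * Real.exp (-s ^ 2) = 1 := by
    rw [← Real.exp_add]; simp
  have h2 : ((-1 : ℝ) ^ k) * ((-1 : ℝ) ^ k) = 1 := by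
    rw [← pow_add]; exact Even.neg_one_pow ⟨k, rfl⟩
  calc ((-1 : ℝ) ^ k * Real.exp (s ^ 2)) * ((-1 : ℝ) ^ k * Real.exp (-s ^ 2) * (hP k).eval s)
      = (((-1 : ℝ) ^ k) * ((-1 : ℝ) ^ k)) * (Real.exp (s ^ 2) * Real.exp (-s ^ 2)) *
        (hP k).eval s := by ring
    _ = (hP k).eval s := by rw [h1, h2]; ring

/-- ψ_k -/
noncomputable def hpsi (k : ℕ) (s : ℝ) : ℝ := Real.exp (-s ^ 2) * (hP k).eval s

lemma hasDerivAt_hpsi (k : ℕ) (s : ℝ) : HasDerivAt (hpsi k) (-(hpsi (k + 1) s)) s := by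
  have h2 : HasDerivAt (fun t : ℝ => (hP k).eval t) ((Polynomial.derivative (hP k)).eval s) s :=
    (hP k).hasDerivAt s
  have h3 : HasDerivAt (fun t : ℝ => Real.exp (-t ^ 2) * (hP k).eval t) _ s :=
    (hasDerivAt_gauss s).fun_mul h2
  convert h3 using 1
  · rfl
  simp only [hpsi, hP, Polynomial.eval_sub, Polynomial.eval_mul, Polynomial.eval_C,
    Polynomial.eval_X]
  ring

lemma integrable_pow_gauss (m : ℕ) : Integrable (fun s : ℝ => s ^ m * Real.exp (-s ^ 2)) := by
  have h : Integrable (fun x : ℝ => x ^ (m : ℝ) * Real.exp (-1 * x ^ 2)) :=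
    integrable_rpow_mul_exp_neg_mul_sq one_pos (show (-1:ℝ) < m from neg_one_lt_zero.trans_le (Nat.cast_nonneg m))
  have e : (fun x : ℝ => x ^ (m : ℝ) * Real.exp (-1 * x ^ 2))
      = fun s : ℝ => s ^ m * Real.exp (-s ^ 2) := by
    funext x; rw [Real.rpow_natCast]; ring_nf
  rwa [e] at h

lemma integrable_gauss_poly (p : Polynomial ℝ) :
    Integrable (fun s : ℝ => Real.exp (-s ^ 2) * p.eval s) := by
  have h : (fun s : ℝ => Real.exp (-s ^ 2) * p.eval s)
      = fun s => ∑ i ∈ Finset.range (p.natDegree + 1), p.coeff i * (s ^ i * Real.exp (-s ^ 2)) := by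
    funext s
    rw [Polynomial.eval_eq_sum_range, Finset.mul_sum]
    exact Finset.sum_congr rfl fun i _ => by ring
  rw [h]
  exact integrable_finset_sum _ fun i _ => (integrable_pow_gauss i).const_mul _

open Polynomial in
lemma hP_deg_coeff (k : ℕ) : (hP k).natDegree ≤ k ∧ (hP k).coeff k = 2 ^ k := by
  induction k with
  | zero => constructor <;> simp [hP]
  | succ k ih =>
    obtain ⟨hd, hc⟩ := ih
    constructor
    · rw [hP]
      refine (natDegree_sub_le _ _).trans (max_le ?_ ?_)
      · refine (natDegree_mul_le).trans ?_
        have : (Polynomial.C (2:ℝ) * Polynomial.X).natDegree ≤ 1 := by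
          apply (natDegree_mul_le).trans; simp
        omega
      · exact (natDegree_derivative_le _).trans (by omega)
    · rw [hP]
      rw [coeff_sub, coeff_derivative]
      have h1 : (hP k).coeff (k + 1 + 1) = 0 :=
        coeff_eq_zero_of_natDegree_lt (by omega)
      have h2 : (Polynomial.C (2:ℝ) * Polynomial.X * hP k).coeff (k + 1) = 2 * (hP k).coeff k := by
        rw [mul_assoc, coeff_C_mul, coeff_X_mul]
      rw [h1, h2, hc]; ring

lemma integrable_hpsi_poly (j : ℕ) (p : Polynomial ℝ) :
    Integrable (fun s : ℝ => hpsi j s * p.eval s) := by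
  refine (integrable_gauss_poly (hP j * p)).congr ?_
  filter_upwards with s
  simp only [hpsi, Polynomial.eval_mul]; ring

open Polynomial in
lemma ibp_step (j : ℕ) (q : Polynomial ℝ) :
    ∫ s : ℝ, Real.exp (-s ^ 2) * ((hP (j + 1)).eval s * q.eval s) =
      ∫ s : ℝ, Real.exp (-s ^ 2) * ((hP j).eval s * (derivative q).eval s) := by
  have key := integral_mul_deriv_eq_deriv_mul_of_integrable
    (u := hpsi j) (u' := fun s => -(hpsi (j + 1) s)) (v := fun s => q.eval s)
    (v' := fun s => (derivative q).eval s)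
    (fun x _ => hasDerivAt_hpsi j x) (fun x _ => q.hasDerivAt x)
    (integrable_hpsi_poly j (derivative q))
    ((integrable_hpsi_poly (j + 1) q).neg.congr (by filter_upwards with s; simp [Pi.mul_apply]; try ring))
    (integrable_hpsi_poly j q)
  have e1 : ∫ s : ℝ, Real.exp (-s ^ 2) * ((hP (j + 1)).eval s * q.eval s)
      = ∫ s : ℝ, hpsi (j + 1) s * q.eval s := by
    congr 1; funext s; simp only [hpsi]; ring
  have e2 : ∫ s : ℝ, Real.exp (-s ^ 2) * ((hP j).eval s * (derivative q).eval s)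
      = ∫ s : ℝ, hpsi j s * (derivative q).eval s := by
    congr 1; funext s; simp only [hpsi]; ring
  rw [e1, e2, key]
  rw [← integral_neg]
  congr 1; funext s; ring

open Polynomial in
lemma ortho_aux (j : ℕ) (q : Polynomial ℝ) :
    ∫ s : ℝ, Real.exp (-s ^ 2) * ((hP j).eval s * q.eval s) =
      ∫ s : ℝ, Real.exp (-s ^ 2) * ((derivative^[j] q).eval s) := by
  induction j generalizing q with
  | zero => simp [hP]
  | succ j ih =>
    rw [ibp_step j q, ih (derivative q), Function.iterate_succ_apply]

open Polynomial in
lemma integral_gauss_eq (c : ℝ) : ∫ s : ℝ, Real.exp (-s ^ 2) * c = c * Real.sqrt π := by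
  rw [MeasureTheory.integral_mul_const]
  have : (fun s : ℝ => Real.exp (-s ^ 2)) = fun s : ℝ => Real.exp (-1 * s ^ 2) := by
    funext s; norm_num
  rw [this, integral_gaussian]
  norm_num [mul_comm]

open Polynomial in
lemma integral_gauss_hP (j k : ℕ) :
    ∫ s : ℝ, Real.exp (-s ^ 2) * ((hP j).eval s * (hP k).eval s) =
      if j = k then 2 ^ j * (Nat.factorial j : ℝ) * Real.sqrt π else 0 := by
  have main : ∀ a b : ℕ, b < a → (∫ s : ℝ, Real.exp (-s ^ 2) * ((hP a).eval s * (hP b).eval s)) = 0 := by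
    intro a b hab
    rw [ortho_aux]
    have hz : derivative^[a] (hP b) = 0 :=
      iterate_derivative_eq_zero (lt_of_le_of_lt (hP_deg_coeff b).1 hab)
    simp [hz]
  rcases lt_trichotomy j k with h | h | h
  · rw [if_neg h.ne]
    have := main k j h
    rw [← this]
    congr 1; funext s; ring
  · subst h
    rw [if_pos rfl, ortho_aux]
    have hdeg : (derivative^[j] (hP j)).natDegree = 0 := by
      have hj := (hP_deg_coeff j).1
      exact Nat.eq_zero_of_le_zero ((natDegree_iterate_derivative _ _).trans (by omega))
    have hval : ∀ s : ℝ, (derivative^[j] (hP j)).eval s = 2 ^ j * (Nat.factorial j : ℝ) := by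
      intro s
      rw [Polynomial.eval_eq_sum_range, hdeg]
      simp only [zero_add, Finset.range_one, Finset.sum_singleton, Finset.sum_range_one, pow_zero, mul_one]
      rw [coeff_iterate_derivative]
      simp only [zero_add, Nat.descFactorial_self, smul_eq_mul]
      rw [(hP_deg_coeff j).2]
      push_cast; ring
    calc (∫ s : ℝ, Real.exp (-s ^ 2) * (derivative^[j] (hP j)).eval s)
        = ∫ s : ℝ, Real.exp (-s ^ 2) * (2 ^ j * (Nat.factorial j : ℝ)) := by
          congr 1; funext s; rw [hval]
      _ = 2 ^ j * (Nat.factorial j : ℝ) * Real.sqrt π := integral_gauss_eq _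
  · rw [if_neg h.ne', main j k h]

lemma gaussHermite_eq {n : ℕ} (β : Fin n → ℕ) (x : Fin n → ℝ) :
    gaussHermite β x = Real.pi ^ (-(n : ℝ) / 2) * ∏ j, hpsi (β j) (x j) := by
  rw [gaussHermite]
  have h1 : (-∑ j, x j ^ 2) = ∑ j, -(x j ^ 2) := by
    rw [← Finset.sum_neg_distrib]
  rw [h1, Real.exp_sum, mul_assoc, ← Finset.prod_mul_distrib]
  congr 1
  exact Finset.prod_congr rfl fun j _ => by rw [hpsi, hermiteH_eval]

lemma update_comp {n : ℕ} {M : Type*} (G : Fin n → ℝ → M) (x : Fin n → ℝ) (j : Fin n) (t : ℝ) :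
    (fun i => G i (Function.update x j t i)) =
      Function.update (fun i => G i (x i)) j (G j t) := by
  funext i
  by_cases h : i = j
  · subst h; simp
  · simp [Function.update_of_ne h]

lemma pderivCoord_gaussHermite {n : ℕ} (β : Fin n → ℕ) (j : Fin n) :
    pderivCoord j (gaussHermite β) =
      fun x => -gaussHermite (Function.update β j (β j + 1)) x := by
  funext x
  rw [pderivCoord]
  have hrepr : (fun t => gaussHermite β (Function.update x j t)) =
      fun t => (Real.pi ^ (-(n : ℝ) / 2) * ∏ i ∈ (Finset.univ \ {j}), hpsi (β i) (x i)) *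
        hpsi (β j) t := by
    funext t
    rw [gaussHermite_eq]
    rw [show (fun i => hpsi (β i) (Function.update x j t i)) = fun i =>
      (fun i => hpsi (β i)) i (Function.update x j t i) from rfl]
    rw [update_comp (fun i => hpsi (β i)) x j t]
    rw [Finset.prod_update_of_mem (Finset.mem_univ j)]
    ring
  rw [hrepr]
  have hd := ((hasDerivAt_hpsi (β j) (x j)).const_mul
    (Real.pi ^ (-(n : ℝ) / 2) * ∏ i ∈ (Finset.univ \ {j}), hpsi (β i) (x i)))
  rw [hd.deriv]
  rw [gaussHermite_eq]
  rw [show (fun i => hpsi ((Function.update β j (β j + 1)) i) (x i)) =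
    Function.update (fun i => hpsi (β i) (x i)) j (hpsi (β j + 1) (x j)) by
      funext i
      by_cases h : i = j
      · subst h; simp
      · simp [Function.update_of_ne h]]
  rw [Finset.prod_update_of_mem (Finset.mem_univ j)]
  ring

lemma pderivCoord_const_mul {n : ℕ} (j : Fin n) (c : ℝ) (f : (Fin n → ℝ) → ℝ) :
    pderivCoord j (fun x => c * f x) = fun x => c * pderivCoord j f x := by
  funext x
  rw [pderivCoord, pderivCoord]
  exact deriv_const_mul_field c

lemma pderivCoord_iterate_const_mul {n : ℕ} (j : Fin n) (m : ℕ) (c : ℝ)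
    (f : (Fin n → ℝ) → ℝ) :
    (pderivCoord j)^[m] (fun x => c * f x) = fun x => c * (pderivCoord j)^[m] f x := by
  induction m generalizing f with
  | zero => simp
  | succ m ih =>
    rw [Function.iterate_succ_apply, pderivCoord_const_mul, ih,
      Function.iterate_succ_apply]

lemma pderivCoord_iterate_gaussHermite {n : ℕ} (β : Fin n → ℕ) (j : Fin n) (m : ℕ) :
    (pderivCoord j)^[m] (gaussHermite β) =
      fun x => (-1 : ℝ) ^ m * gaussHermite (Function.update β j (β j + m)) x := by
  induction m generalizing β with
  | zero =>
    simp only [Function.iterate_zero_apply, pow_zero, one_mul, add_zero,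
      Function.update_eq_self]
  | succ m ih =>
    rw [Function.iterate_succ_apply', ih]
    have h1 : (fun x => (-1 : ℝ) ^ m * gaussHermite (Function.update β j (β j + m)) x) =
        fun x => (-1 : ℝ) ^ m * (gaussHermite (Function.update β j (β j + m))) x := rfl
    rw [h1, pderivCoord_const_mul, pderivCoord_gaussHermite]
    funext x
    have h2 : Function.update (Function.update β j (β j + m)) j
        (Function.update β j (β j + m) j + 1) = Function.update β j (β j + (m + 1)) := by
      rw [Function.update_self, Function.update_idem, add_assoc]
    rw [h2]
    ring

lemma foldr_pderiv {n : ℕ} (α : Fin n → ℕ) (l : List (Fin n)) (hl : l.Nodup) (β : Fin n → ℕ) :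
    l.foldr (fun j g => (pderivCoord j)^[α j] g) (gaussHermite β) =
      fun x => (-1 : ℝ) ^ ((l.map α).sum) *
        gaussHermite (fun i => if i ∈ l then β i + α i else β i) x := by
  induction l with
  | nil =>
    simp only [List.foldr_nil, List.map_nil, List.sum_nil, pow_zero, one_mul,
      List.not_mem_nil, if_false]
  | cons j l ih =>
    obtain ⟨hjl, hl'⟩ := List.nodup_cons.mp hl
    rw [List.foldr_cons, ih hl']
    set βl : Fin n → ℕ := fun i => if i ∈ l then β i + α i else β i with hβl
    rw [pderivCoord_iterate_const_mul, pderivCoord_iterate_gaussHermite]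
    funext x
    have hupd : Function.update βl j (βl j + α j) =
        fun i => if i ∈ j :: l then β i + α i else β i := by
      funext i
      by_cases hij : i = j
      · subst hij
        simp only [Function.update_self, hβl, if_neg hjl, List.mem_cons, true_or, if_pos]
      · rw [Function.update_of_ne hij]
        simp only [hβl, List.mem_cons, hij, false_or]
    rw [hupd]
    simp only [List.map_cons, List.sum_cons, pow_add]
    ring
  done

lemma multiPderiv_gaussHermite {n : ℕ} (α : Fin n → ℕ) (β : Fin n → ℕ) :
    multiPderiv α (gaussHermite β) =
      fun x => (-1 : ℝ) ^ (∑ j, α j) * gaussHermite (fun i => β i + α i) x := by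
  rw [multiPderiv, foldr_pderiv α _ (List.nodup_finRange n) β]
  have h1 : ((List.finRange n).map α).sum = ∑ j, α j := (Fin.sum_univ_def α).symm
  have h2 : (fun i => if i ∈ List.finRange n then β i + α i else β i) = fun i => β i + α i := by
    funext i; rw [if_pos (List.mem_finRange i)]
  rw [h1, h2]

open scoped NNReal ENNReal

section Dim

variable {n : ℕ}

noncomputable def gDens (n : ℕ) (x : Fin n → ℝ) : ℝ :=
  Real.pi ^ ((n : ℝ) / 2) * Real.exp (∑ j, x j ^ 2)

lemma gDens_pos (x : Fin n → ℝ) : 0 < gDens n x := by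
  unfold gDens
  have := Real.pi_pos
  positivity

lemma continuous_gDens : Continuous (gDens n) :=
  continuous_const.mul (Real.continuous_exp.comp
    (continuous_finset_sum _ fun j _ => (continuous_apply j).pow 2))

lemma gaussMPi_eq (n : ℕ) : gaussMPi n =
    volume.withDensity (fun x => (((gDens n x).toNNReal : ℝ≥0) : ℝ≥0∞)) := rfl

lemma integral_gaussMPi (f : (Fin n → ℝ) → ℝ) :
    ∫ x, f x ∂(gaussMPi n) = ∫ x, gDens n x * f x := by
  rw [gaussMPi_eq, integral_withDensity_eq_integral_smul
    (continuous_gDens.measurable.real_toNNReal) f]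
  congr 1; funext x
  simp [NNReal.smul_def, Real.coe_toNNReal _ (gDens_pos x).le]

lemma integrable_gaussMPi_iff {f : (Fin n → ℝ) → ℝ} :
    Integrable f (gaussMPi n) ↔ Integrable (fun x => gDens n x * f x) := by
  rw [gaussMPi_eq, integrable_withDensity_iff_integrable_smul
    (continuous_gDens.measurable.real_toNNReal)]
  constructor <;> intro h <;> refine h.congr (Filter.Eventually.of_forall fun x => ?_) <;>
    simp [NNReal.smul_def, Real.coe_toNNReal _ (gDens_pos x).le]

/-- one-dimensional factor -/
noncomputable def oneD (a b : ℕ) (t : ℝ) : ℝ :=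
  Real.pi ^ (-(1 : ℝ) / 2) * (Real.exp (-t ^ 2) * ((hP a).eval t * (hP b).eval t))

lemma integrable_oneD (a b : ℕ) : Integrable (oneD a b) := by
  have h : oneD a b = fun t => Real.pi ^ (-(1 : ℝ) / 2) *
      (Real.exp (-t ^ 2) * (hP a * hP b).eval t) := by
    funext t; rw [oneD, Polynomial.eval_mul]
  rw [h]
  exact (integrable_gauss_poly (hP a * hP b)).const_mul _

lemma integral_oneD (a b : ℕ) :
    ∫ t, oneD a b t = if a = b then (2 : ℝ) ^ a * (Nat.factorial a : ℝ) else 0 := by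
  unfold oneD
  rw [integral_const_mul, integral_gauss_hP]
  have hpi : Real.pi ^ (-(1 : ℝ) / 2) * Real.sqrt π = 1 := by
    rw [Real.sqrt_eq_rpow, ← Real.rpow_add Real.pi_pos]
    norm_num
  split_ifs with h
  · calc Real.pi ^ (-(1 : ℝ) / 2) * (2 ^ a * (Nat.factorial a : ℝ) * Real.sqrt π)
        = (Real.pi ^ (-(1 : ℝ) / 2) * Real.sqrt π) * (2 ^ a * (Nat.factorial a : ℝ)) := by ring
      _ = 2 ^ a * (Nat.factorial a : ℝ) := by rw [hpi, one_mul]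
  · rw [mul_zero]

lemma exp_sq_hpsi (a b : ℕ) (t : ℝ) :
    Real.exp (t ^ 2) * (hpsi a t * hpsi b t) =
      Real.exp (-t ^ 2) * ((hP a).eval t * (hP b).eval t) := by
  unfold hpsi
  have h : Real.exp (t ^ 2) * Real.exp (-t ^ 2) = 1 := by
    rw [← Real.exp_add]; simp
  calc Real.exp (t ^ 2) * ((Real.exp (-t ^ 2) * (hP a).eval t) *
          (Real.exp (-t ^ 2) * (hP b).eval t))
      = (Real.exp (t ^ 2) * Real.exp (-t ^ 2)) * (Real.exp (-t ^ 2) *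
          ((hP a).eval t * (hP b).eval t)) := by ring
    _ = Real.exp (-t ^ 2) * ((hP a).eval t * (hP b).eval t) := by rw [h, one_mul]

lemma pi_rpow_neg_n : Real.pi ^ (-(n : ℝ) / 2) = (Real.pi ^ (-(1 : ℝ) / 2)) ^ (n : ℕ) := by
  rw [← Real.rpow_natCast (Real.pi ^ (-(1:ℝ)/2)) n, ← Real.rpow_mul Real.pi_pos.le]
  congr 1; ring

lemma dens_prod_repr (β β' : Fin n → ℕ) (x : Fin n → ℝ) :
    gDens n x * (gaussHermite β x * gaussHermite β' x) =
      ∏ j, oneD (β j) (β' j) (x j) := by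
  rw [gaussHermite_eq β x, gaussHermite_eq β' x]
  unfold gDens oneD
  rw [Real.exp_sum]
  have hπ : Real.pi ^ ((n : ℝ) / 2) * (Real.pi ^ (-(n : ℝ) / 2) * Real.pi ^ (-(n : ℝ) / 2))
      = Real.pi ^ (-(n : ℝ) / 2) := by
    rw [← Real.rpow_add Real.pi_pos, ← Real.rpow_add Real.pi_pos]
    congr 1; ring
  calc (Real.pi ^ ((n : ℝ) / 2) * ∏ j, Real.exp (x j ^ 2)) *
        ((Real.pi ^ (-(n : ℝ) / 2) * ∏ j, hpsi (β j) (x j)) *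
          (Real.pi ^ (-(n : ℝ) / 2) * ∏ j, hpsi (β' j) (x j)))
      = (Real.pi ^ ((n : ℝ) / 2) * (Real.pi ^ (-(n : ℝ) / 2) * Real.pi ^ (-(n : ℝ) / 2))) *
        ((∏ j, Real.exp (x j ^ 2)) * ((∏ j, hpsi (β j) (x j)) * ∏ j, hpsi (β' j) (x j))) := by
        ring
    _ = Real.pi ^ (-(n : ℝ) / 2) *
        ∏ j, Real.exp (x j ^ 2) * (hpsi (β j) (x j) * hpsi (β' j) (x j)) := by
        rw [hπ, ← Finset.prod_mul_distrib, ← Finset.prod_mul_distrib]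
    _ = Real.pi ^ (-(n : ℝ) / 2) *
        ∏ j, Real.exp (-x j ^ 2) * ((hP (β j)).eval (x j) * (hP (β' j)).eval (x j)) := by
        rw [Finset.prod_congr rfl fun j _ => exp_sq_hpsi (β j) (β' j) (x j)]
    _ = ∏ j, Real.pi ^ (-(1 : ℝ) / 2) *
          (Real.exp (-x j ^ 2) * ((hP (β j)).eval (x j) * (hP (β' j)).eval (x j))) := by
        rw [pi_rpow_neg_n,
          show ((Real.pi ^ (-(1:ℝ)/2)) ^ (n:ℕ)) = ∏ _j : Fin n, Real.pi ^ (-(1:ℝ)/2) by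
            rw [Finset.prod_const, Finset.card_univ, Fintype.card_fin],
          ← Finset.prod_mul_distrib]

end Dim

section Dim2

variable {n : ℕ}

noncomputable def gNorm (β : Fin n → ℕ) : ℝ :=
  ∏ j, (2 : ℝ) ^ (β j) * (Nat.factorial (β j) : ℝ)

lemma gNorm_nonneg (β : Fin n → ℕ) : 0 ≤ gNorm β :=
  Finset.prod_nonneg fun j _ => by positivity

lemma integrable_gh_mul (β β' : Fin n → ℕ) :
    Integrable (fun x => gaussHermite β x * gaussHermite β' x) (gaussMPi n) := by
  rw [integrable_gaussMPi_iff]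
  have h : (fun x : Fin n → ℝ => gDens n x * (gaussHermite β x * gaussHermite β' x)) =
      fun x => ∏ j, oneD (β j) (β' j) (x j) := by
    funext x; exact dens_prod_repr β β' x
  rw [h]
  exact MeasureTheory.Integrable.fin_nat_prod (fun j => integrable_oneD (β j) (β' j))

lemma integral_gh_mul (β β' : Fin n → ℕ) :
    ∫ x, gaussHermite β x * gaussHermite β' x ∂(gaussMPi n) =
      if β = β' then gNorm β else 0 := by
  rw [integral_gaussMPi]
  have h : (fun x : Fin n → ℝ => gDens n x * (gaussHermite β x * gaussHermite β' x)) =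
      fun x => ∏ j, oneD (β j) (β' j) (x j) := by
    funext x; exact dens_prod_repr β β' x
  rw [h, MeasureTheory.volume_pi, MeasureTheory.integral_fintype_prod_eq_prod
    (fun j (t : ℝ) => oneD (β j) (β' j) t)]
  have h2 : ∀ j : Fin n, (∫ t, oneD (β j) (β' j) t) =
      if β j = β' j then (2 : ℝ) ^ (β j) * (Nat.factorial (β j) : ℝ) else 0 :=
    fun j => integral_oneD _ _
  rw [Finset.prod_congr rfl fun j _ => h2 j]
  by_cases h : β = β'
  · subst h
    rw [if_pos rfl]
    exact Finset.prod_congr rfl fun j _ => if_pos rfl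
  · rw [if_neg h]
    obtain ⟨j, hj⟩ := Function.ne_iff.mp h
    exact Finset.prod_eq_zero (Finset.mem_univ j) (if_neg hj)

lemma continuous_gaussHermite (β : Fin n → ℕ) : Continuous (gaussHermite β) := by
  have h : gaussHermite β = fun x => Real.pi ^ (-(n : ℝ) / 2) * ∏ j, hpsi (β j) (x j) := by
    funext x; exact gaussHermite_eq β x
  rw [h]
  refine continuous_const.mul (continuous_finset_prod _ fun j _ => ?_)
  have : Continuous (hpsi (β j)) :=
    (Real.continuous_exp.comp (continuous_pow 2).neg).mul (hP (β j)).continuous_aeval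
  exact this.comp (continuous_apply j)

/-- The master computation: squared L² norm of a finite combination of pairwise
orthogonal functions. -/
lemma sum_sq_integral {I : Type*} [DecidableEq I] (s : Finset I) (d : I → ℝ)
    (φ : I → (Fin n → ℝ) → ℝ) (N : I → ℝ)
    (hInt : ∀ i j : I, Integrable (fun x => φ i x * φ j x) (gaussMPi n))
    (hOrtho : ∀ i j : I, (∫ x, φ i x * φ j x ∂(gaussMPi n)) = if i = j then N i else 0) :
    Integrable (fun x => (∑ i ∈ s, d i * φ i x) ^ 2) (gaussMPi n) ∧
      (∫ x, (∑ i ∈ s, d i * φ i x) ^ 2 ∂(gaussMPi n)) = ∑ i ∈ s, d i ^ 2 * N i := by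
  have hexp : (fun x => (∑ i ∈ s, d i * φ i x) ^ 2) =
      fun x => ∑ i ∈ s, ∑ j ∈ s, (d i * d j) * (φ i x * φ j x) := by
    funext x
    rw [sq, Finset.sum_mul_sum]
    exact Finset.sum_congr rfl fun i _ => Finset.sum_congr rfl fun j _ => by ring
  have hint2 : ∀ i ∈ s, Integrable (fun x => ∑ j ∈ s, (d i * d j) * (φ i x * φ j x))
      (gaussMPi n) :=
    fun i _ => integrable_finset_sum _ fun j _ => (hInt i j).const_mul _
  constructor
  · rw [hexp]
    exact integrable_finset_sum _ hint2
  · rw [hexp, integral_finset_sum _ hint2]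
    refine Finset.sum_congr rfl fun i hi => ?_
    rw [integral_finset_sum _ fun j _ => (hInt i j).const_mul _]
    have h3 : ∀ j ∈ s, (∫ x, (d i * d j) * (φ i x * φ j x) ∂(gaussMPi n)) =
        if i = j then d i ^ 2 * N i else 0 := by
      intro j _
      rw [integral_const_mul, hOrtho i j]
      split_ifs with h
      · subst h; ring
      · rw [mul_zero]
    rw [Finset.sum_congr rfl h3, Finset.sum_ite_eq s i (fun _ => d i ^ 2 * N i), if_pos hi]

end Dim2

section NatBounds

lemma fact_add_le (b a : ℕ) : (b + a).factorial ≤ (b + a) ^ a * b.factorial := by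
  induction a with
  | zero => simp
  | succ a ih =>
    calc (b + (a + 1)).factorial = (b + a + 1) * (b + a).factorial := by
          rw [show b + (a + 1) = (b + a) + 1 from rfl, Nat.factorial_succ]
      _ ≤ (b + a + 1) * ((b + a) ^ a * b.factorial) := Nat.mul_le_mul_left _ ih
      _ ≤ (b + a + 1) * ((b + a + 1) ^ a * b.factorial) :=
          Nat.mul_le_mul_left _ (Nat.mul_le_mul_right _
            (Nat.pow_le_pow_left (Nat.le_succ _) a))
      _ = (b + (a + 1)) ^ (a + 1) * b.factorial := by ring

lemma nat_bound {n : ℕ} (hn : 1 ≤ n) (α β : Fin n → ℕ) :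
    (∏ j, 2 ^ (β j + α j) * (β j + α j).factorial) ≤
      (2 * (1 + ∑ j, α j)) ^ (2 * ∑ j, α j) *
        (∏ j, 2 ^ (β j) * (β j).factorial) * ((∑ j, β j) + n) ^ (∑ j, α j) := by
  set A := ∑ j, α j with hA
  set B := ∑ j, β j with hB
  have step1 : (∏ j, 2 ^ (β j + α j) * (β j + α j).factorial) ≤
      ∏ j, (2 ^ (β j) * (β j).factorial) * (2 * (B + A)) ^ (α j) := by
    refine Finset.prod_le_prod' fun j _ => ?_
    have hle : β j + α j ≤ B + A :=
      Nat.add_le_add (Finset.single_le_sum (f := β) (fun i _ => Nat.zero_le _) (Finset.mem_univ j))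
        (Finset.single_le_sum (f := α) (fun i _ => Nat.zero_le _) (Finset.mem_univ j))
    calc 2 ^ (β j + α j) * (β j + α j).factorial
        ≤ 2 ^ (β j + α j) * ((β j + α j) ^ (α j) * (β j).factorial) :=
          Nat.mul_le_mul_left _ (fact_add_le _ _)
      _ ≤ 2 ^ (β j + α j) * ((B + A) ^ (α j) * (β j).factorial) :=
          Nat.mul_le_mul_left _ (Nat.mul_le_mul_right _ (Nat.pow_le_pow_left hle _))
      _ = (2 ^ (β j) * (β j).factorial) * (2 ^ (α j) * (B + A) ^ (α j)) := by
          rw [pow_add]; ring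
      _ = (2 ^ (β j) * (β j).factorial) * (2 * (B + A)) ^ (α j) := by
          rw [mul_pow]
  have step2 : (∏ j, (2 ^ (β j) * (β j).factorial) * (2 * (B + A)) ^ (α j)) =
      (∏ j, 2 ^ (β j) * (β j).factorial) * (2 * (B + A)) ^ A := by
    rw [Finset.prod_mul_distrib, Finset.prod_pow_eq_pow_sum]
  have hBA : 2 * (B + A) ≤ (2 * (1 + A)) * (B + n) := by
    have h1 : A ≤ A * n := Nat.le_mul_of_pos_right A hn
    have h2 : (2 * (1 + A)) * (B + n) = 2 * B + 2 * n + 2 * (A * B) + 2 * (A * n) := by ring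
    omega
  have step3 : (2 * (B + A)) ^ A ≤ ((2 * (1 + A)) * (B + n)) ^ A :=
    Nat.pow_le_pow_left hBA A
  have step4 : ((2 * (1 + A)) * (B + n)) ^ A = (2 * (1 + A)) ^ A * (B + n) ^ A := mul_pow _ _ _
  have step5 : (2 * (1 + A)) ^ A ≤ (2 * (1 + A)) ^ (2 * A) :=
    Nat.pow_le_pow_right (by omega) (by omega)
  calc (∏ j, 2 ^ (β j + α j) * (β j + α j).factorial)
      ≤ (∏ j, 2 ^ (β j) * (β j).factorial) * (2 * (B + A)) ^ A := by rw [← step2]; exact step1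
    _ ≤ (∏ j, 2 ^ (β j) * (β j).factorial) * ((2 * (1 + A)) ^ A * (B + n) ^ A) := by
        refine Nat.mul_le_mul_left _ (step3.trans (le_of_eq step4))
    _ ≤ (∏ j, 2 ^ (β j) * (β j).factorial) * ((2 * (1 + A)) ^ (2 * A) * (B + n) ^ A) :=
        Nat.mul_le_mul_left _ (Nat.mul_le_mul_right _ step5)
    _ = (2 * (1 + A)) ^ (2 * A) * (∏ j, 2 ^ (β j) * (β j).factorial) * (B + n) ^ A := by ring

lemma gNorm_cast {n : ℕ} (γ : Fin n → ℕ) :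
    gNorm γ = ((∏ j, 2 ^ (γ j) * (γ j).factorial : ℕ) : ℝ) := by
  rw [gNorm]
  push_cast
  rfl

lemma coeff_bound {n : ℕ} (hn : 1 ≤ n) (α β : Fin n → ℕ) :
    (((∑ j, (β j : ℝ)) + n) ^ (-(∑ j, (α j : ℝ)) / 2)) ^ 2 *
        gNorm (fun i => β i + α i) ≤
      ((((2 * (1 + ∑ j, α j)) ^ (2 * ∑ j, α j) : ℕ) : ℝ)) * gNorm β := by
  set A := ∑ j, α j with hA
  set B := ∑ j, β j with hB
  have hcastA : (∑ j, (α j : ℝ)) = (A : ℝ) := by rw [hA]; push_cast; rfl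
  have hcastB : ((∑ j, (β j : ℝ)) + n) = ((B + n : ℕ) : ℝ) := by rw [hB]; push_cast; rfl
  have hbase_pos : (0 : ℝ) < ((B + n : ℕ) : ℝ) := by
    have : 0 < B + n := by omega
    exact_mod_cast this
  rw [hcastA, hcastB]
  have hsq : ((((B + n : ℕ) : ℝ)) ^ (-(A : ℝ) / 2)) ^ 2 =
      ((((B + n : ℕ) : ℝ)) ^ (A : ℕ))⁻¹ := by
    rw [sq, ← Real.rpow_add hbase_pos]
    rw [show -(A : ℝ) / 2 + -(A : ℝ) / 2 = -(A : ℝ) by ring]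
    rw [Real.rpow_neg hbase_pos.le, Real.rpow_natCast]
  rw [hsq]
  have hpowpos : (0 : ℝ) < (((B + n : ℕ) : ℝ)) ^ (A : ℕ) := pow_pos hbase_pos A
  have hkey : gNorm (fun i => β i + α i) ≤
      ((((2 * (1 + A)) ^ (2 * A) : ℕ) : ℝ)) * gNorm β * (((B + n : ℕ) : ℝ)) ^ (A : ℕ) := by
    rw [gNorm_cast, gNorm_cast β]
    have := nat_bound hn α β
    calc ((∏ j, 2 ^ (β j + α j) * (β j + α j).factorial : ℕ) : ℝ)
        ≤ (((2 * (1 + A)) ^ (2 * A) * (∏ j, 2 ^ (β j) * (β j).factorial) * (B + n) ^ A : ℕ) : ℝ) :=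
          Nat.cast_le.mpr this
      _ = ((((2 * (1 + A)) ^ (2 * A) : ℕ) : ℝ)) * ((∏ j, 2 ^ (β j) * (β j).factorial : ℕ) : ℝ) *
            (((B + n : ℕ) : ℝ)) ^ (A : ℕ) := by push_cast; ring
  calc ((((B + n : ℕ) : ℝ)) ^ (A : ℕ))⁻¹ * gNorm (fun i => β i + α i)
      ≤ ((((B + n : ℕ) : ℝ)) ^ (A : ℕ))⁻¹ *
          (((((2 * (1 + A)) ^ (2 * A) : ℕ) : ℝ)) * gNorm β * (((B + n : ℕ) : ℝ)) ^ (A : ℕ)) :=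
        mul_le_mul_of_nonneg_left hkey (inv_nonneg.mpr hpowpos.le)
    _ = ((((2 * (1 + A)) ^ (2 * A) : ℕ) : ℝ)) * gNorm β := by
        field_simp

end NatBounds

lemma eLpNorm_eq_sqrt {n : ℕ} {I : Type*} (s : Finset I) (d : I → ℝ)
    (φ : I → (Fin n → ℝ) → ℝ) (hcont : ∀ i, Continuous (φ i))
    (hInt : Integrable (fun x => (∑ i ∈ s, d i * φ i x) ^ 2) (gaussMPi n)) :
    eLpNorm (fun x => ∑ i ∈ s, d i * φ i x) 2 (gaussMPi n) =
      ENNReal.ofReal ((∫ x, (∑ i ∈ s, d i * φ i x) ^ 2 ∂(gaussMPi n)) ^ (2⁻¹ : ℝ)) := by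
  have hcont2 : Continuous fun x => ∑ i ∈ s, d i * φ i x :=
    continuous_finset_sum _ fun i _ => continuous_const.mul (hcont i)
  have hmem : MemLp (fun x => ∑ i ∈ s, d i * φ i x) 2 (gaussMPi n) :=
    (memLp_two_iff_integrable_sq hcont2.aestronglyMeasurable).2 hInt
  rw [hmem.eLpNorm_eq_integral_rpow_norm two_ne_zero ENNReal.ofNat_ne_top]
  have ht : (2 : ℝ≥0∞).toReal = 2 := by simp
  rw [ht]
  congr 1
  congr 1
  refine integral_congr_ae (Filter.Eventually.of_forall fun x => ?_)
  dsimp only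
  rw [Real.norm_eq_abs, show (2 : ℝ) = ((2 : ℕ) : ℝ) by norm_num, Real.rpow_natCast, sq_abs]

/-- L²(γ₋₁)-boundedness of the Riesz transform ∂^α 𝒜^{-|α|/2} on the linear
span of the eigenfunctions γH_β of 𝒜. -/
theorem riesz_L2_bounded (n : ℕ) (hn : 1 ≤ n) (α : Fin n → ℕ) (hα : α ≠ 0) :
    ∃ C : ℝ, ∀ c : (Fin n → ℕ) →₀ ℝ,
      eLpNorm (fun x => ∑ β ∈ c.support,
          c β * ((∑ j, β j : ℝ) + n) ^ (-(∑ j, α j : ℝ) / 2) *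
            multiPderiv α (gaussHermite β) x) 2 (gaussMPi n) ≤
        ENNReal.ofReal C *
          eLpNorm (fun x => ∑ β ∈ c.support, c β * gaussHermite β x) 2 (gaussMPi n) := by
  classical
  set A := ∑ j, α j with hA
  set C : ℝ := (((2 * (1 + A)) ^ A : ℕ) : ℝ) with hC
  have hCnonneg : 0 ≤ C := Nat.cast_nonneg _
  have hC2 : C ^ 2 = (((2 * (1 + A)) ^ (2 * A) : ℕ) : ℝ) := by
    rw [hC]
    push_cast
    rw [← pow_mul, mul_comm A 2]
  refine ⟨C, fun c => ?_⟩
  have hGeq : (fun x => ∑ β ∈ c.support,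
      c β * ((∑ j, (β j : ℝ)) + n) ^ (-(∑ j, (α j : ℝ)) / 2) * multiPderiv α (gaussHermite β) x)
      = fun x => ∑ β ∈ c.support,
        (c β * ((∑ j, (β j : ℝ)) + n) ^ (-(∑ j, (α j : ℝ)) / 2) * (-1 : ℝ) ^ A) *
          gaussHermite (fun i => β i + α i) x := by
    funext x
    refine Finset.sum_congr rfl fun β _ => ?_
    rw [multiPderiv_gaussHermite, ← hA]
    dsimp only
    ring
  rw [hGeq]
  have hadd_inj : ∀ β β' : Fin n → ℕ,
      ((fun i => β i + α i) = fun i => β' i + α i) ↔ β = β' := by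
    intro β β'
    constructor
    · intro h
      funext i
      have h2 := congrFun h i
      omega
    · intro h; rw [h]
  have hOrtho' : ∀ β β' : Fin n → ℕ,
      (∫ x, gaussHermite (fun i => β i + α i) x * gaussHermite (fun i => β' i + α i) x
          ∂(gaussMPi n)) = if β = β' then gNorm (fun i => β i + α i) else 0 := by
    intro β β'
    rw [integral_gh_mul]
    exact if_congr (hadd_inj β β') rfl rfl
  obtain ⟨hIntF, hIF⟩ := sum_sq_integral c.support (fun β => c β) gaussHermite gNorm
    integrable_gh_mul integral_gh_mul
  obtain ⟨hIntG, hIG⟩ := sum_sq_integral c.support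
    (fun β => c β * ((∑ j, (β j : ℝ)) + n) ^ (-(∑ j, (α j : ℝ)) / 2) * (-1 : ℝ) ^ A)
    (fun β => gaussHermite (fun i => β i + α i)) (fun β => gNorm (fun i => β i + α i))
    (fun β β' => integrable_gh_mul _ _) hOrtho'
  rw [eLpNorm_eq_sqrt _ _ _ (fun β => continuous_gaussHermite _) hIntG,
    eLpNorm_eq_sqrt _ _ _ (fun β => continuous_gaussHermite β) hIntF,
    hIG, hIF, ← ENNReal.ofReal_mul hCnonneg]
  apply ENNReal.ofReal_le_ofReal
  set SG := ∑ β ∈ c.support,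
    (c β * ((∑ j, (β j : ℝ)) + n) ^ (-(∑ j, (α j : ℝ)) / 2) * (-1 : ℝ) ^ A) ^ 2 *
      gNorm (fun i => β i + α i) with hSG
  set SF := ∑ β ∈ c.support, (c β) ^ 2 * gNorm β with hSF
  have hSF_nonneg : 0 ≤ SF :=
    Finset.sum_nonneg fun β _ => mul_nonneg (sq_nonneg _) (gNorm_nonneg β)
  have hSG_nonneg : 0 ≤ SG :=
    Finset.sum_nonneg fun β _ => mul_nonneg (sq_nonneg _) (gNorm_nonneg _)
  have hterm : ∀ β ∈ c.support,
      (c β * ((∑ j, (β j : ℝ)) + n) ^ (-(∑ j, (α j : ℝ)) / 2) * (-1 : ℝ) ^ A) ^ 2 *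
        gNorm (fun i => β i + α i) ≤ C ^ 2 * ((c β) ^ 2 * gNorm β) := by
    intro β _
    have hneg1 : ((-1 : ℝ) ^ A) ^ 2 = 1 := by
      rw [← pow_mul, mul_comm A 2, pow_mul, neg_one_sq, one_pow]
    have hb := coeff_bound hn α β
    rw [← hA] at hb
    rw [← hC2] at hb
    calc (c β * ((∑ j, (β j : ℝ)) + n) ^ (-(∑ j, (α j : ℝ)) / 2) * (-1 : ℝ) ^ A) ^ 2 *
          gNorm (fun i => β i + α i)
        = (c β) ^ 2 * ((((∑ j, (β j : ℝ)) + n) ^ (-(∑ j, (α j : ℝ)) / 2)) ^ 2 *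
            gNorm (fun i => β i + α i)) := by
          rw [mul_pow, mul_pow, hneg1]; ring
      _ ≤ (c β) ^ 2 * (C ^ 2 * gNorm β) :=
          mul_le_mul_of_nonneg_left hb (sq_nonneg _)
      _ = C ^ 2 * ((c β) ^ 2 * gNorm β) := by ring
  have hsum : SG ≤ C ^ 2 * SF := by
    rw [hSG, hSF, Finset.mul_sum]
    exact Finset.sum_le_sum hterm
  calc SG ^ (2⁻¹ : ℝ)
      ≤ (C ^ 2 * SF) ^ (2⁻¹ : ℝ) := Real.rpow_le_rpow hSG_nonneg hsum (by norm_num)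
    _ = (C ^ 2) ^ (2⁻¹ : ℝ) * SF ^ (2⁻¹ : ℝ) := Real.mul_rpow (sq_nonneg C) hSF_nonneg
    _ = C * SF ^ (2⁻¹ : ℝ) := by
        rw [show ((C ^ 2 : ℝ)) ^ (2⁻¹ : ℝ) = C by
          rw [← Real.rpow_natCast C 2, ← Real.rpow_mul hCnonneg]
          norm_num]
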